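/- Let γ be a generator of the multiplicative group of the finite field F_q, and let σ be the F_q-algebra automorphism of F_q[X] sending X to γX. If polynomials f_1, ..., f_s ∈ F_q[X], each of degree less than q-1, are linearly independent over F_q, then the determinant of the s×s matrix whose (i,j) entry is f_j(γ^{i-1} X) is a nonzero polynomial in F_q[X]. -/

import Mathlib

open Polynomial

section Aux

lemma ringAutPowSucc {K : Type*} [Field K] (σ : K ≃+* K) (i : ℕ) (x : K) :
    (σ^(i+1)) x = σ ((σ^i) x) := by
  rw [pow_succ']; rfl

/-- The key induction: from a relation among the "rows" `σ^i (g j)` we can produce a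
relation with `σ`-fixed coefficients. -/
lemma lemA {K : Type*} [Field K] (σ : K ≃+* K) :
    ∀ (t : ℕ) (g c : Fin t → K), c ≠ 0 →
      (∀ i : Fin t, ∑ j, (σ^(i:ℕ)) (g j) * c j = 0) →
      ∃ e : Fin t → K, e ≠ 0 ∧ (∀ j, σ (e j) = e j) ∧ ∑ j, g j * e j = 0 := by
  intro t
  induction t with
  | zero =>
    intro g c hc _
    exact absurd (_root_.funext fun j => j.elim0) hc
  | succ t IH =>
    intro g c hc hrel
    by_cases hlast : c (Fin.last t) = 0
    · have hc' : (fun j : Fin t => c j.castSucc) ≠ 0 := by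
        intro h0
        apply hc
        funext j
        refine Fin.lastCases hlast (fun j => ?_) j
        exact congrFun h0 j
      have hrel' : ∀ i : Fin t,
          ∑ j : Fin t, (σ^(i:ℕ)) ((fun j : Fin t => g j.castSucc) j) *
            (fun j : Fin t => c j.castSucc) j = 0 := by
        intro i
        have h := hrel i.castSucc
        rw [Fin.sum_univ_castSucc] at h
        simpa [hlast] using h
      obtain ⟨e', he0, hfix, hsum⟩ := IH _ _ hc' hrel'
      refine ⟨Fin.snoc e' 0, ?_, ?_, ?_⟩
      · intro h0
        apply he0
        funext j
        have := congrFun h0 j.castSucc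
        simpa [Fin.snoc_castSucc] using this
      · intro j
        refine Fin.lastCases ?_ (fun j => ?_) j
        · simp [Fin.snoc_last]
        · simpa [Fin.snoc_castSucc] using hfix j
      · rw [Fin.sum_univ_castSucc]
        simp only [Fin.snoc_castSucc, Fin.snoc_last, mul_zero, add_zero]
        exact hsum
    · set c' : Fin (t+1) → K := fun j => c j * (c (Fin.last t))⁻¹ with hc'def
      have hrel' : ∀ i : Fin (t+1), ∑ j, (σ^(i:ℕ)) (g j) * c' j = 0 := by
        intro i
        have : ∑ j, (σ^(i:ℕ)) (g j) * c' j
            = (∑ j, (σ^(i:ℕ)) (g j) * c j) * (c (Fin.last t))⁻¹ := by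
          rw [Finset.sum_mul]
          exact Finset.sum_congr rfl fun j _ => by rw [hc'def, mul_assoc]
        rw [this, hrel i, zero_mul]
      have hc'last : c' (Fin.last t) = 1 := mul_inv_cancel₀ hlast
      set d : Fin t → K := fun j => σ.symm (c' j.castSucc) - c' j.castSucc with hddef
      have hd : ∀ i : Fin t,
          ∑ j : Fin t, (σ^(i:ℕ)) ((fun j : Fin t => g j.castSucc) j) * d j = 0 := by
        intro i
        have h1 := hrel' i.succ
        have h1' : ∑ j : Fin (t+1), (σ^(i:ℕ)) (g j) * σ.symm (c' j) = 0 := by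
          have := congrArg σ.symm h1
          rw [map_sum, map_zero] at this
          rw [← this]
          refine Finset.sum_congr rfl fun j _ => ?_
          conv_rhs => rw [map_mul]
          congr 1
          rw [Fin.val_succ, ringAutPowSucc, σ.symm_apply_apply]
        have h2 := hrel' i.castSucc
        rw [Fin.coe_castSucc] at h2
        have h3 : ∑ j : Fin (t+1), (σ^(i:ℕ)) (g j) * (σ.symm (c' j) - c' j) = 0 := by
          simp only [mul_sub]
          rw [Finset.sum_sub_distrib, h1', h2, sub_zero]
        rw [Fin.sum_univ_castSucc] at h3
        have hlast0 : σ.symm (c' (Fin.last t)) - c' (Fin.last t) = 0 := by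
          rw [hc'last, map_one, sub_self]
        rw [hlast0, mul_zero, add_zero] at h3
        exact h3
      by_cases hd0 : d = 0
      · refine ⟨c', ?_, ?_, ?_⟩
        · intro h0
          have := congrFun h0 (Fin.last t)
          rw [hc'last] at this
          exact one_ne_zero this
        · intro j
          refine Fin.lastCases ?_ (fun j => ?_) j
          · rw [hc'last, map_one]
          · have := congrFun hd0 j
            rw [hddef] at this
            simp only [Pi.zero_apply, sub_eq_zero] at this
            conv_lhs => rw [← this]
            rw [σ.apply_symm_apply]
        · have h0 := hrel' 0
          simpa using h0
      · obtain ⟨e', he0, hfix, hsum⟩ := IH _ _ hd0 hd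
        refine ⟨Fin.snoc e' 0, ?_, ?_, ?_⟩
        · intro h0
          apply he0
          funext j
          have := congrFun h0 j.castSucc
          simpa [Fin.snoc_castSucc] using this
        · intro j
          refine Fin.lastCases ?_ (fun j => ?_) j
          · simp [Fin.snoc_last]
          · simpa [Fin.snoc_castSucc] using hfix j
        · rw [Fin.sum_univ_castSucc]
          simp only [Fin.snoc_castSucc, Fin.snoc_last, mul_zero, add_zero]
          exact hsum

variable {Fq : Type*} [Field Fq]

lemma coeff_comp_CmulX (f : Polynomial Fq) (c : Fq) (k : ℕ) :
    (f.comp (C c * X)).coeff k = c ^ k * f.coeff k := by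
  rw [Polynomial.comp_eq_sum_left, Polynomial.sum_def, Polynomial.finset_sum_coeff]
  have hterm : ∀ n : ℕ, (C (f.coeff n) * (C c * X) ^ n).coeff k
      = if n = k then c ^ k * f.coeff k else 0 := by
    intro n
    rw [mul_pow, ← C_pow, ← mul_assoc, ← C_mul, coeff_C_mul, coeff_X_pow]
    split_ifs <;> simp_all <;> ring
  rw [Finset.sum_congr rfl fun n _ => hterm n, Finset.sum_ite_eq' f.support k]
  split_ifs with h
  · rfl
  · rw [Polynomial.notMem_support_iff.mp h, mul_zero]

lemma comp_CmulX_comp (f : Polynomial Fq) (u v : Fq) :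
    (f.comp (C u * X)).comp (C v * X) = f.comp (C (u * v) * X) := by
  rw [Polynomial.comp_assoc]
  congr 1
  rw [mul_comp, C_comp, X_comp, ← mul_assoc, ← C_mul]

/-- The ring automorphism `f(X) ↦ f(cX)` of `Fq[X]`. -/
noncomputable def tauEquiv (c : Fq) (hc : c ≠ 0) :
    Polynomial Fq ≃+* Polynomial Fq where
  toFun g := g.comp (C c * X)
  invFun g := g.comp (C c⁻¹ * X)
  left_inv g := by
    simp only []
    rw [comp_CmulX_comp, mul_inv_cancel₀ hc, C_1, one_mul, comp_X]
  right_inv g := by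
    simp only []
    rw [comp_CmulX_comp, inv_mul_cancel₀ hc, C_1, one_mul, comp_X]
  map_mul' a b := by simp [mul_comp]
  map_add' a b := by simp [add_comp]

lemma tauEquiv_apply (c : Fq) (hc : c ≠ 0) (g : Polynomial Fq) :
    tauEquiv c hc g = g.comp (C c * X) := rfl

lemma sigma_pow_algebraMap (c : Fq) (hc : c ≠ 0) (i : ℕ) (g : Polynomial Fq) :
    (((IsFractionRing.ringEquivOfRingEquiv (tauEquiv c hc) :
        FractionRing (Polynomial Fq) ≃+* FractionRing (Polynomial Fq)))^i)
        (algebraMap (Polynomial Fq) (FractionRing (Polynomial Fq)) g)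
      = algebraMap (Polynomial Fq) (FractionRing (Polynomial Fq))
          (g.comp (C (c^i) * X)) := by
  induction i with
  | zero =>
    rw [pow_zero, pow_zero, C_1, one_mul, comp_X]
    rfl
  | succ i IH =>
    rw [ringAutPowSucc, IH, IsFractionRing.ringEquivOfRingEquiv_algebraMap,
      tauEquiv_apply, comp_CmulX_comp, ← pow_succ]

end Aux

theorem folded_wronskian_ne_zero
    (Fq : Type*) [Field Fq] [Fintype Fq]
    (γ : Fqˣ) (hγ : ∀ u : Fqˣ, u ∈ Subgroup.zpowers γ)
    (s : ℕ) (f : Fin s → Polynomial Fq)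
    (hdeg : ∀ j, (f j).degree < (Fintype.card Fq - 1 : ℕ))
    (hli : LinearIndependent Fq f) :
    Matrix.det (Matrix.of fun i j : Fin s =>
      (f j).comp (Polynomial.C ((γ : Fq) ^ (i : ℕ)) * Polynomial.X)) ≠ 0 := by
  classical
  intro hdet
  set q := Fintype.card Fq with hq
  have hq2 : 2 ≤ q := Fintype.one_lt_card
  set n := q - 1 with hndef
  have hn1 : 1 ≤ n := by omega
  set c : Fq := (γ : Fq) with hcdef
  have hc0 : c ≠ 0 := γ.ne_zero
  -- order facts
  have hcard : orderOf γ = n := by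
    rw [orderOf_eq_card_of_forall_mem_zpowers hγ, Nat.card_eq_fintype_card, Fintype.card_units]
  have hcn : c ^ n = 1 := by
    have h1 : γ ^ n = 1 := by rw [← hcard]; exact pow_orderOf_eq_one γ
    have := congrArg (Units.val) h1
    simpa using this
  have hdvd : ∀ k : ℕ, c ^ k = 1 → n ∣ k := by
    intro k hk
    have h1 : γ ^ k = 1 := Units.ext (by simpa using hk)
    rw [← hcard]
    exact orderOf_dvd_of_pow_eq_one h1
  -- notation
  let K := FractionRing (Polynomial Fq)
  let ι : Polynomial Fq →+* K := algebraMap (Polynomial Fq) K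
  have hιinj : Function.Injective ι := IsFractionRing.injective (Polynomial Fq) K
  let σ : K ≃+* K := IsFractionRing.ringEquivOfRingEquiv (tauEquiv c hc0)
  have hσι : ∀ (i : ℕ) (g : Polynomial Fq),
      (σ^i) (ι g) = ι (g.comp (C (c^i) * X)) := fun i g =>
    sigma_pow_algebraMap c hc0 i g
  -- kernel vector over the polynomial ring
  obtain ⟨v, hv0, hvM⟩ := Matrix.exists_mulVec_eq_zero_iff.mpr hdet
  -- relations over K
  have hrelK : ∀ i : Fin s, ∑ j, (σ^(i:ℕ)) (ι (f j)) * ι (v j) = 0 := by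
    intro i
    have h := congrFun hvM i
    simp only [Matrix.mulVec, dotProduct, Matrix.of_apply, Pi.zero_apply] at h
    have := congrArg ι h
    rw [map_sum, map_zero] at this
    rw [← this]
    refine Finset.sum_congr rfl fun j _ => ?_
    rw [hσι, map_mul]
  have hvK0 : (fun j => ι (v j)) ≠ 0 := by
    intro h0
    apply hv0
    funext j
    have := congrFun h0 j
    simp only [Pi.zero_apply] at this
    exact hιinj (by simpa using this)
  obtain ⟨e, he0, hfix, hsum⟩ := lemA σ s (fun j => ι (f j)) (fun j => ι (v j)) hvK0 hrelK
  -- clear denominators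
  obtain ⟨b, hb⟩ := IsLocalization.exist_integer_multiples
    (nonZeroDivisors (Polynomial Fq)) Finset.univ e
  have hb' : ∀ j : Fin s, ∃ a : Polynomial Fq, ι a = ι (b : Polynomial Fq) * e j := by
    intro j
    obtain ⟨a, ha⟩ := hb j (Finset.mem_univ j)
    exact ⟨a, by rw [ha, Algebra.smul_def]⟩
  choose a ha using hb'
  have hbne : (b : Polynomial Fq) ≠ 0 := nonZeroDivisors.ne_zero b.2
  obtain ⟨m, hm⟩ : ∃ m, n = m + 1 := ⟨n - 1, by omega⟩
  -- the "norm" of b and its partial product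
  set F : ℕ → Polynomial Fq := fun i => (b : Polynomial Fq).comp (C (c^i) * X) with hFdef
  have hF0 : F 0 = (b : Polynomial Fq) := by
    rw [hFdef]; simp [comp_X]
  have hFn : F n = (b : Polynomial Fq) := by
    rw [hFdef]; simp [hcn, comp_X]
  have hFne : ∀ i, F i ≠ 0 := by
    intro i h0
    apply hbne
    have : tauEquiv (c^i) (pow_ne_zero i hc0) (b : Polynomial Fq) = 0 := h0
    exact (EmbeddingLike.map_eq_zero_iff).mp this
  set R0 : Polynomial Fq := ∏ i ∈ Finset.range m, F (i+1) with hR0def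
  set N : Polynomial Fq := ∏ i ∈ Finset.range n, F i with hNdef
  have hNR0 : N = R0 * (b : Polynomial Fq) := by
    rw [hNdef, hm, Finset.prod_range_succ', hF0, hR0def]
  have hNfix : N.comp (C c * X) = N := by
    have hcomp : N.comp (C c * X) = ∏ i ∈ Finset.range n, F (i+1) := by
      rw [hNdef, Polynomial.prod_comp]
      refine Finset.prod_congr rfl fun i _ => ?_
      rw [hFdef, comp_CmulX_comp, ← pow_succ]
    rw [hcomp, hm, Finset.prod_range_succ, ← hm, hFn, ← hR0def, ← hNR0]
  have hNne : N ≠ 0 := by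
    rw [hNdef]
    exact Finset.prod_ne_zero_iff.mpr fun i _ => hFne i
  -- the fixed polynomial coefficients
  set A : Fin s → Polynomial Fq := fun j => a j * R0 with hAdef
  have hιA : ∀ j, ι (A j) = e j * ι N := by
    intro j
    show ι (a j * R0) = e j * ι N
    rw [map_mul, ha j, hNR0, map_mul]
    ring
  have hAfix : ∀ j, (A j).comp (C c * X) = A j := by
    intro j
    apply hιinj
    have h1 : σ (ι (A j)) = ι ((A j).comp (C c * X)) := by
      have := hσι 1 (A j)
      rwa [pow_one, pow_one] at this
    rw [← h1, hιA, map_mul, hfix j]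
    have h2 : σ (ι N) = ι N := by
      have := hσι 1 N
      rw [pow_one, pow_one] at this
      rw [this, hNfix]
    rw [h2]
  have hAcoeff : ∀ j k, ¬ (n ∣ k) → (A j).coeff k = 0 := by
    intro j k hk
    have h1 := congrArg (fun p => Polynomial.coeff p k) (hAfix j)
    simp only [coeff_comp_CmulX] at h1
    have hck : c ^ k ≠ 1 := fun h => hk (hdvd k h)
    have : (c ^ k - 1) * (A j).coeff k = 0 := by rw [sub_mul, h1, one_mul, sub_self]
    rcases mul_eq_zero.mp this with h | h
    · exact absurd (by linear_combination h) hck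
    · exact h
  -- the global relation over the polynomial ring
  have hsum0 : ∑ j, A j * f j = 0 := by
    apply hιinj
    rw [map_sum, map_zero]
    have : ∀ j : Fin s, ι (A j * f j) = (ι (f j) * e j) * ι N := by
      intro j
      rw [map_mul, hιA]
      ring
    rw [Finset.sum_congr rfl fun j _ => this j, ← Finset.sum_mul, hsum, zero_mul]
  -- window extraction
  have hwin : ∀ (mm : ℕ) (j : Fin s), (A j).coeff (mm * n) = 0 := by
    intro mm
    have hlin : ∑ j, (A j).coeff (mm * n) • f j = 0 := by
      apply Polynomial.ext
      intro r
      rw [Polynomial.finset_sum_coeff, Polynomial.coeff_zero]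
      by_cases hr : r < n
      · have h0 := congrArg (fun p => Polynomial.coeff p (mm * n + r)) hsum0
        simp only [Polynomial.finset_sum_coeff, Polynomial.coeff_zero] at h0
        have hterm : ∀ j : Fin s,
            (A j * f j).coeff (mm * n + r) = (A j).coeff (mm * n) * (f j).coeff r := by
          intro j
          rw [Polynomial.coeff_mul]
          refine Finset.sum_eq_single (mm * n, r) ?_ ?_
          · rintro ⟨k, l⟩ hx hne
            rw [Finset.HasAntidiagonal.mem_antidiagonal] at hx
            by_cases hdk : n ∣ k
            · by_cases hl : l < n
              · exfalso
                apply hne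
                obtain ⟨m', hm'⟩ := hdk
                have hmod : l % n = r % n := by
                  have : (k + l) % n = (mm * n + r) % n := by rw [hx]
                  rwa [hm', Nat.mul_add_mod, Nat.add_comm (mm*n) r,
                    Nat.add_mul_mod_self_right] at this
                have hlr : l = r := by
                  rwa [Nat.mod_eq_of_lt hl, Nat.mod_eq_of_lt hr] at hmod
                have hkk : k = mm * n := by omega
                rw [hkk, hlr]
              · push_neg at hl
                have : (f j).coeff l = 0 := by
                  apply Polynomial.coeff_eq_zero_of_degree_lt
                  exact lt_of_lt_of_le (hdeg j) (by exact_mod_cast hl)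
                rw [this, mul_zero]
            · rw [hAcoeff j k hdk, zero_mul]
          · intro hnotin
            exact absurd (Finset.HasAntidiagonal.mem_antidiagonal.mpr (rfl : mm * n + r = mm * n + r)) hnotin
        rw [Finset.sum_congr rfl fun j _ => hterm j] at h0
        simpa [smul_eq_mul] using h0
      · push_neg at hr
        have : ∀ j : Fin s, (f j).coeff r = 0 := by
          intro j
          apply Polynomial.coeff_eq_zero_of_degree_lt
          exact lt_of_lt_of_le (hdeg j) (by exact_mod_cast hr)
        simp [Polynomial.coeff_smul, this]
    intro j
    exact Fintype.linearIndependent_iff.mp hli (fun j => (A j).coeff (mm * n)) hlin j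
  have hA0 : ∀ j, A j = 0 := by
    intro j
    apply Polynomial.ext
    intro k
    rw [Polynomial.coeff_zero]
    by_cases hd : n ∣ k
    · obtain ⟨mm, rfl⟩ := hd
      rw [mul_comm]
      exact hwin mm j
    · exact hAcoeff j k hd
  apply he0
  funext j
  have h1 : e j * ι N = 0 := by rw [← hιA j, hA0 j, map_zero]
  have hNK : ι N ≠ 0 := fun h => hNne (hιinj (by simpa using h))
  rcases mul_eq_zero.mp h1 with h | h
  · exact h
  · exact absurd h hNK
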